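/- For the Hadamard graph with parameter γ (N = 16γ vertices, intersection array {4γ, 4γ−1, 2γ, 1; 1, 2γ, 4γ−1, 4γ}), the effective resistance between vertices at maximal distance 4 equals 2/(4γ−1). -/

import Mathlib

open Matrix

/-- The four Moore–Penrose pseudoinverse conditions for real matrices. -/
def IsMoorePenrose {V : Type*} [Fintype V] [DecidableEq V] (L Lp : Matrix V V ℝ) : Prop :=
  L * Lp * L = L ∧ Lp * L * Lp = Lp ∧ (L * Lp)ᵀ = L * Lp ∧ (Lp * L)ᵀ = Lp * L

/-- Effective resistance between two nodes, from the pseudoinverse of the Laplacian. -/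
def effRes {V : Type*} (Lp : Matrix V V ℝ) (α β : V) : ℝ :=
  Lp α α + Lp β β - 2 * Lp α β

/-- Distance-regularity with diameter `d` and intersection numbers `b i`, `c i`. -/
def IsDistanceRegular {V : Type*} [Fintype V] (G : SimpleGraph V) (d : ℕ) (b c : ℕ → ℕ) : Prop :=
  G.Connected ∧ (∀ α β : V, G.dist α β ≤ d) ∧
  ∀ i, i ≤ d → ∀ α β : V, G.dist α β = i →
    ({γ : V | G.Adj β γ ∧ G.dist α γ = i + 1}.ncard = b i ∧
     {γ : V | G.Adj β γ ∧ G.dist α γ = i - 1}.ncard = c i)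

noncomputable def psiH (g : ℝ) : ℕ → ℝ
  | 0 => 1 / (4*g - 1)
  | 1 => (20*g - 1) / (64*g^2*(4*g - 1))
  | 2 => 1 / (8*g*(4*g - 1))
  | 3 => 1 / (64*g^2)
  | _ => 0

lemma key_potential {V : Type*} [Fintype V] [DecidableEq V]
    (G : SimpleGraph V) [DecidableRel G.Adj] (γ : ℕ) (hγ : 1 ≤ γ)
    (hN : Fintype.card V = 16 * γ)
    (hdr : IsDistanceRegular G 4
      (fun i => [4 * γ, 4 * γ - 1, 2 * γ, 1].getD i 0)
      (fun i => [0, 1, 2 * γ, 4 * γ - 1, 4 * γ].getD i 0))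
    (α : V) (v : V) :
    (G.lapMatrix ℝ *ᵥ fun w => psiH (γ : ℝ) (G.dist α w)) v
      = (if v = α then 1 else 0) - 1 / (16 * (γ : ℝ)) := by
  obtain ⟨hconn, hdiam, hcount⟩ := hdr
  have hg1 : (1:ℝ) ≤ (γ:ℝ) := by exact_mod_cast hγ
  have hg0 : (γ:ℝ) ≠ 0 := by linarith
  have h4g : 4*(γ:ℝ) - 1 ≠ 0 := by linarith
  -- the filter finsets
  set F : ℕ → Finset V := fun j => (G.neighborFinset v).filter (fun w => G.dist α w = j) with hF
  have hFcard : ∀ j, (F j).card = {w : V | G.Adj v w ∧ G.dist α w = j}.ncard := by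
    intro j
    rw [← Set.ncard_coe_finset]
    congr 1
    ext w
    simp [hF, SimpleGraph.mem_neighborFinset]
  -- degree of every vertex is 4γ
  have hdeg : ∀ u : V, G.degree u = 4 * γ := by
    intro u
    have h0 := (hcount 0 (by norm_num) u u (SimpleGraph.dist_self)).1
    have : {w : V | G.Adj u w ∧ G.dist u w = 0 + 1}.ncard
        = (G.neighborFinset u).card := by
      rw [← Set.ncard_coe_finset]
      congr 1
      ext w
      simp only [SimpleGraph.mem_neighborFinset, Finset.coe_filter, Set.mem_setOf_eq,
        Finset.mem_coe, zero_add]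
      constructor
      · rintro ⟨h, _⟩; exact h
      · intro h; exact ⟨h, SimpleGraph.dist_eq_one_iff_adj.mpr h⟩
    rw [this] at h0
    rw [← SimpleGraph.card_neighborFinset_eq_degree, h0]
    rfl
  -- neighbors are at distance within 1
  have htri : ∀ w ∈ G.neighborFinset v, G.dist α v ≤ G.dist α w + 1 ∧ G.dist α w ≤ G.dist α v + 1 := by
    intro w hw
    rw [SimpleGraph.mem_neighborFinset] at hw
    have h1 : G.dist v w = 1 := SimpleGraph.dist_eq_one_iff_adj.mpr hw
    have h2 : G.dist w v = 1 := SimpleGraph.dist_eq_one_iff_adj.mpr hw.symm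
    constructor
    · have := hconn.dist_triangle (u := α) (v := w) (w := v)
      omega
    · have := hconn.dist_triangle (u := α) (v := v) (w := w)
      omega
  have hFempty : ∀ j, (j + 1 < G.dist α v ∨ G.dist α v + 1 < j) → F j = ∅ := by
    intro j hj
    rw [Finset.eq_empty_iff_forall_notMem]
    intro w hw
    rw [hF, Finset.mem_filter] at hw
    have := htri w hw.1
    omega
  -- expand the laplacian
  rw [SimpleGraph.lapMatrix_mulVec_apply]
  have hsplit : ∑ w ∈ G.neighborFinset v, psiH (γ:ℝ) (G.dist α w)
      = ∑ j ∈ Finset.range 6, ((F j).card : ℝ) * psiH (γ:ℝ) j := by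
    rw [← Finset.sum_fiberwise_of_maps_to (g := fun w => G.dist α w) (t := Finset.range 6)]
    · refine Finset.sum_congr rfl fun j _ => ?_
      rw [hF]
      rw [Finset.sum_congr rfl (fun w hw => by
        rw [Finset.mem_filter] at hw; rw [hw.2] : ∀ w ∈ _, psiH (γ:ℝ) (G.dist α w) = psiH (γ:ℝ) j)]
      rw [Finset.sum_const, nsmul_eq_mul]
    · intro w hw
      have := hdiam α w
      simp only [Finset.mem_range]
      omega
  have hcards : ∑ j ∈ Finset.range 6, (F j).card = 4 * γ := by
    rw [hF, ← Finset.card_eq_sum_card_fiberwise (f := fun w => G.dist α w)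
      (t := Finset.range 6)]
    · rw [SimpleGraph.card_neighborFinset_eq_degree, hdeg]
    · intro w hw
      have := hdiam α w
      simp only [Finset.mem_range, Finset.coe_range, Set.mem_Iio]
      omega
  rw [hsplit, hdeg v]
  -- counts from distance regularity
  obtain ⟨i, hi, hile⟩ : ∃ i, G.dist α v = i ∧ i ≤ 4 := ⟨G.dist α v, rfl, hdiam α v⟩
  have hcnt := hcount i hile α v hi
  have hβ : ∀ j, (F j).card = {w : V | G.Adj v w ∧ G.dist α w = j}.ncard := hFcard
  have hvα : (v = α) ↔ i = 0 := by
    rw [← hi]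
    constructor
    · intro h; subst h; exact SimpleGraph.dist_self
    · intro h; exact ((hconn.dist_eq_zero_iff).mp h).symm
  have hb := hcnt.1
  have hc := hcnt.2
  rw [← hβ] at hb hc
  simp only [Finset.sum_range_succ, Finset.sum_range_zero, zero_add]
  interval_cases i
  · -- i = 0
    have e2 : F 2 = ∅ := hFempty 2 (by omega)
    have e3 : F 3 = ∅ := hFempty 3 (by omega)
    have e4 : F 4 = ∅ := hFempty 4 (by omega)
    have e5 : F 5 = ∅ := hFempty 5 (by omega)
    simp only [List.getD] at hb hc
    norm_num at hb hc
    rw [if_pos (hvα.mpr rfl), hi, e2, e3, e4, e5, hb, hc]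
    simp only [psiH, Finset.card_empty]
    push_cast
    field_simp
    ring
  · -- i = 1
    have e3 : F 3 = ∅ := hFempty 3 (by omega)
    have e4 : F 4 = ∅ := hFempty 4 (by omega)
    have e5 : F 5 = ∅ := hFempty 5 (by omega)
    simp only [List.getD] at hb hc
    norm_num at hb hc
    have hmid : (F 1).card = 0 := by
      simp only [Finset.sum_range_succ, Finset.sum_range_zero, zero_add, e3, e4, e5,
        Finset.card_empty] at hcards
      omega
    rw [if_neg (fun h => by simpa using hvα.mp h), hi, e3, e4, e5, hb, hc, hmid]
    simp only [psiH, Finset.card_empty]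
    push_cast [Nat.cast_sub (by omega : 1 ≤ 4 * γ)]
    field_simp
    ring
  · -- i = 2
    have e0 : F 0 = ∅ := hFempty 0 (by omega)
    have e4 : F 4 = ∅ := hFempty 4 (by omega)
    have e5 : F 5 = ∅ := hFempty 5 (by omega)
    simp only [List.getD] at hb hc
    norm_num at hb hc
    have hmid : (F 2).card = 0 := by
      simp only [Finset.sum_range_succ, Finset.sum_range_zero, zero_add, e0, e4, e5,
        Finset.card_empty] at hcards
      omega
    rw [if_neg (fun h => by simpa using hvα.mp h), hi, e0, e4, e5, hb, hc, hmid]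
    simp only [psiH, Finset.card_empty]
    push_cast [Nat.cast_sub (by omega : 1 ≤ 4 * γ)]
    field_simp
    ring
  · -- i = 3
    have e0 : F 0 = ∅ := hFempty 0 (by omega)
    have e1 : F 1 = ∅ := hFempty 1 (by omega)
    have e5 : F 5 = ∅ := hFempty 5 (by omega)
    simp only [List.getD] at hb hc
    norm_num at hb hc
    have hmid : (F 3).card = 0 := by
      simp only [Finset.sum_range_succ, Finset.sum_range_zero, zero_add, e0, e1, e5,
        Finset.card_empty] at hcards
      omega
    rw [if_neg (fun h => by simpa using hvα.mp h), hi, e0, e1, e5, hb, hc, hmid]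
    simp only [psiH, Finset.card_empty]
    push_cast [Nat.cast_sub (by omega : 1 ≤ 4 * γ)]
    field_simp
    ring
  · -- i = 4
    have e0 : F 0 = ∅ := hFempty 0 (by omega)
    have e1 : F 1 = ∅ := hFempty 1 (by omega)
    have e2 : F 2 = ∅ := hFempty 2 (by omega)
    simp only [List.getD] at hb hc
    norm_num at hb hc
    have hmid : (F 4).card = 0 := by
      simp only [Finset.sum_range_succ, Finset.sum_range_zero, zero_add, e0, e1, e2,
        Finset.card_empty] at hcards
      omega
    rw [if_neg (fun h => by simpa using hvα.mp h), hi, e0, e1, e2, hb, hc, hmid]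
    simp only [psiH, Finset.card_empty]
    push_cast [Nat.cast_sub (by omega : 1 ≤ 4 * γ)]
    field_simp
    ring

lemma mp_unique {V : Type*} [Fintype V] [DecidableEq V] {L A B : Matrix V V ℝ}
    (hA : IsMoorePenrose L A) (hB : IsMoorePenrose L B) : A = B := by
  obtain ⟨hA1, hA2, hA3, hA4⟩ := hA
  obtain ⟨hB1, hB2, hB3, hB4⟩ := hB
  have hLA : L * A = L * B := by
    calc L * A = (L * A)ᵀ := hA3.symm
    _ = Aᵀ * Lᵀ := by rw [transpose_mul]
    _ = Aᵀ * (L * B * L)ᵀ := by rw [hB1]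
    _ = Aᵀ * (Lᵀ * (L * B)ᵀ) := by rw [transpose_mul]
    _ = Aᵀ * Lᵀ * (L * B) := by rw [hB3, Matrix.mul_assoc]
    _ = (L * A)ᵀ * (L * B) := by rw [transpose_mul]
    _ = L * A * (L * B) := by rw [hA3]
    _ = L * A * L * B := by noncomm_ring
    _ = L * B := by rw [hA1]
  have hAL : A * L = B * L := by
    calc A * L = (A * L)ᵀ := hA4.symm
    _ = Lᵀ * Aᵀ := by rw [transpose_mul]
    _ = (L * B * L)ᵀ * Aᵀ := by rw [hB1]
    _ = (B * L)ᵀ * Lᵀ * Aᵀ := by simp only [transpose_mul, Matrix.mul_assoc]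
    _ = B * L * (Lᵀ * Aᵀ) := by rw [hB4]; noncomm_ring
    _ = B * L * (A * L)ᵀ := by rw [transpose_mul]
    _ = B * L * (A * L) := by rw [hA4]
    _ = B * (L * A * L) := by simp only [Matrix.mul_assoc]
    _ = B * L := by rw [hA1]
  calc A = A * L * A := hA2.symm
  _ = B * L * A := by rw [hAL]
  _ = B * (L * A) := by rw [Matrix.mul_assoc]
  _ = B * (L * B) := by rw [hLA]
  _ = B * L * B := by rw [Matrix.mul_assoc]
  _ = B := hB2

lemma mp_symm {V : Type*} [Fintype V] [DecidableEq V] {L A : Matrix V V ℝ}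
    (hL : Lᵀ = L) (hA : IsMoorePenrose L A) : Aᵀ = A := by
  have hAt : IsMoorePenrose L Aᵀ := by
    obtain ⟨h1, h2, h3, h4⟩ := hA
    refine ⟨?_, ?_, ?_, ?_⟩
    · calc L * Aᵀ * L = (Lᵀ * A * Lᵀ)ᵀ := by
            simp only [transpose_mul, transpose_transpose, Matrix.mul_assoc]
      _ = (L * A * L)ᵀ := by rw [hL]
      _ = Lᵀ := by rw [h1]
      _ = L := hL
    · calc Aᵀ * L * Aᵀ = (A * Lᵀ * A)ᵀ := by
            simp only [transpose_mul, transpose_transpose, Matrix.mul_assoc]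
      _ = (A * L * A)ᵀ := by rw [hL]
      _ = Aᵀ := by rw [h2]
    · calc (L * Aᵀ)ᵀ = A * Lᵀ := by rw [transpose_mul, transpose_transpose]
      _ = A * L := by rw [hL]
      _ = (A * L)ᵀ := h4.symm
      _ = Lᵀ * Aᵀ := by rw [transpose_mul]
      _ = L * Aᵀ := by rw [hL]
    · calc (Aᵀ * L)ᵀ = Lᵀ * A := by rw [transpose_mul, transpose_transpose]
      _ = L * A := by rw [hL]
      _ = (L * A)ᵀ := h3.symm
      _ = Aᵀ * Lᵀ := by rw [transpose_mul]
      _ = Aᵀ * L := by rw [hL]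
  exact mp_unique hAt hA

/-- For the Hadamard graph with parameter `γ` (`N = 16γ` vertices, intersection array
`{4γ, 4γ-1, 2γ, 1; 1, 2γ, 4γ-1, 4γ}`), the effective resistance between vertices at the
maximal distance 4 equals `2/(4γ - 1)`. -/
theorem hadamard_antipodal_resistance {V : Type*} [Fintype V] [DecidableEq V]
    (G : SimpleGraph V) [DecidableRel G.Adj] (γ : ℕ) (hγ : 1 ≤ γ)
    (hN : Fintype.card V = 16 * γ)
    (hdr : IsDistanceRegular G 4
      (fun i => [4 * γ, 4 * γ - 1, 2 * γ, 1].getD i 0)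
      (fun i => [0, 1, 2 * γ, 4 * γ - 1, 4 * γ].getD i 0))
    (Lp : Matrix V V ℝ) (hLp : IsMoorePenrose (G.lapMatrix ℝ) Lp)
    (α β : V) (hd : G.dist α β = 4) :
    effRes Lp α β = 2 / (4 * (γ : ℝ) - 1) := by
  have hg1 : (1:ℝ) ≤ (γ:ℝ) := by exact_mod_cast hγ
  have h4g : 4 * (γ:ℝ) - 1 ≠ 0 := by linarith
  set L := G.lapMatrix ℝ with hLdef
  have hLsymm : Lᵀ = L := G.isSymm_lapMatrix (R := ℝ)
  have hLpsymm : Lpᵀ = Lp := mp_symm hLsymm hLp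
  have hαβ : α ≠ β := by
    intro h
    rw [h, SimpleGraph.dist_self] at hd
    omega
  set f : V → ℝ := fun w => (if w = α then 1 else 0) - (if w = β then 1 else 0) with hf
  set x : V → ℝ := fun w => psiH (γ:ℝ) (G.dist α w) - psiH (γ:ℝ) (G.dist β w) with hx
  have hLx : L *ᵥ x = f := by
    funext v
    have h1 := key_potential G γ hγ hN hdr α v
    have h2 := key_potential G γ hγ hN hdr β v
    have hxs : x = (fun w => psiH (γ:ℝ) (G.dist α w)) - (fun w => psiH (γ:ℝ) (G.dist β w)) := rfl
    rw [hxs, Matrix.mulVec_sub]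
    simp only [Pi.sub_apply, hLdef, h1, h2, hf]
    ring
  -- Lp *ᵥ f pointwise
  have hLpf : Lp *ᵥ f = fun u => Lp u α - Lp u β := by
    funext u
    simp [Matrix.mulVec, dotProduct, hf, mul_sub, mul_ite, mul_one, mul_zero,
      Finset.sum_sub_distrib, Finset.sum_ite_eq', Finset.mem_univ]
  have hdot1 : f ⬝ᵥ (Lp *ᵥ f) = Lp α α + Lp β β - Lp α β - Lp β α := by
    rw [hLpf]
    simp [dotProduct, hf, sub_mul, ite_mul, one_mul, zero_mul,
      Finset.sum_sub_distrib, Finset.sum_ite_eq', Finset.mem_univ]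
    ring
  have hdot2 : f ⬝ᵥ (Lp *ᵥ f) = x ⬝ᵥ f := by
    calc f ⬝ᵥ (Lp *ᵥ f) = (L *ᵥ x) ⬝ᵥ (Lp *ᵥ f) := by rw [hLx]
    _ = (x ᵥ* L) ⬝ᵥ (Lp *ᵥ f) := by
          have hvx : x ᵥ* L = L *ᵥ x := by
            nth_rewrite 1 [← hLsymm]
            rw [Matrix.vecMul_transpose]
          rw [hvx]
    _ = x ⬝ᵥ (L *ᵥ (Lp *ᵥ f)) := by simp only [Matrix.dotProduct_mulVec]
    _ = x ⬝ᵥ (L *ᵥ (Lp *ᵥ (L *ᵥ x))) := by rw [hLx]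
    _ = x ⬝ᵥ ((L * Lp * L) *ᵥ x) := by rw [← Matrix.mulVec_mulVec, ← Matrix.mulVec_mulVec]
    _ = x ⬝ᵥ (L *ᵥ x) := by rw [hLp.1]
    _ = x ⬝ᵥ f := by rw [hLx]
  have hxf : x ⬝ᵥ f = 2 / (4 * (γ:ℝ) - 1) := by
    have : x ⬝ᵥ f = x α - x β := by
      simp [dotProduct, hf, mul_sub, mul_ite, mul_one, mul_zero,
        Finset.sum_sub_distrib, Finset.sum_ite_eq', Finset.mem_univ]
    have hd' : G.dist β α = 4 := by rw [SimpleGraph.dist_comm]; exact hd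
    rw [this, hx]
    simp only [SimpleGraph.dist_self, hd, hd']
    simp only [psiH]
    field_simp
    ring
  have hsym : Lp β α = Lp α β := by
    have := congrFun (congrFun hLpsymm α) β
    simpa [Matrix.transpose_apply] using this
  have : effRes Lp α β = f ⬝ᵥ (Lp *ᵥ f) := by
    rw [hdot1, effRes, hsym]
    ring
  rw [this, hdot2, hxf]
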